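/- Let K = [0,1] and φ : K → ℝ be concave, continuous, and strictly increasing. Suppose on some measurable space (Y,𝒜) there is a sub-σ-algebra ℬ, an event A ∈ ℬ with p := π(A) ∈ (0,1), and the functional I(ξ) = φ⁻¹(∫ φ(ξ) dπ) on bounded ℬ-measurable K-valued functions is translation invariant: I(ξ + c) = I(ξ) + c whenever ξ, ξ+c are in the domain. Then φ is, up to a positive affine transformation, either the identity or x ↦ −exp(−θx) for some θ > 0. -/

import Mathlib

open MeasureTheory
open scoped ENNReal

set_option linter.unusedSectionVars false
set_option linter.unusedVariables false


/-- Cauchy functional equation on `[0,1]` with continuity gives linearity. -/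
lemma cauchy_lin (f : ℝ → ℝ) (hc : ContinuousOn f (Set.Icc 0 1))
    (hadd : ∀ x ∈ Set.Icc (0:ℝ) 1, ∀ y ∈ Set.Icc (0:ℝ) 1, x + y ≤ 1 → f (x+y) = f x + f y) :
    ∀ x ∈ Set.Icc (0:ℝ) 1, f x = f 1 * x := by
  have h0 : f 0 = 0 := by
    have := hadd 0 (by norm_num) 0 (by norm_num) (by norm_num)
    simpa using this
  -- dyadic step
  set d : ℕ → ℝ := fun n => (1/2 : ℝ)^n with hd
  have hdpos : ∀ n, 0 < d n := fun n => by positivity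
  have hdle1 : ∀ n, d n ≤ 1 := fun n => by
    simpa [hd] using pow_le_one₀ (by norm_num : (0:ℝ) ≤ 1/2) (by norm_num : (1/2:ℝ) ≤ 1)
  have hpow : ∀ n, (2:ℝ)^n * d n = 1 := by
    intro n; simp [hd, ← mul_pow]
  have hB : ∀ n : ℕ, ∀ kk : ℕ, (kk : ℝ) ≤ 2^n → f (kk * d n) = kk * f (d n) := by
    intro n kk
    induction kk with
    | zero => intro _; simpa using h0
    | succ m ih =>
      intro hm
      have hm' : (m : ℝ) ≤ 2^n := by
        have : (m:ℝ) ≤ (m:ℝ)+1 := by linarith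
        calc (m:ℝ) ≤ (m:ℝ)+1 := this
        _ = ((m+1 : ℕ):ℝ) := by push_cast; ring
        _ ≤ 2^n := hm
      have hmem1 : (m : ℝ) * d n ∈ Set.Icc (0:ℝ) 1 := by
        constructor
        · positivity
        · calc (m:ℝ) * d n ≤ 2^n * d n := by
                have := (hdpos n).le; nlinarith
          _ = 1 := hpow n
      have hmem2 : d n ∈ Set.Icc (0:ℝ) 1 := ⟨(hdpos n).le, hdle1 n⟩
      have hsum : (m:ℝ) * d n + d n ≤ 1 := by
        have : ((m:ℝ)+1) * d n ≤ 2^n * d n := by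
          have h1 : ((m+1:ℕ):ℝ) = (m:ℝ)+1 := by push_cast; ring
          rw [h1] at hm
          nlinarith [(hdpos n).le]
        calc (m:ℝ) * d n + d n = ((m:ℝ)+1) * d n := by ring
        _ ≤ 2^n * d n := this
        _ = 1 := hpow n
      have := hadd _ hmem1 _ hmem2 hsum
      have hcast : ((m+1:ℕ):ℝ) * d n = (m:ℝ) * d n + d n := by push_cast; ring
      rw [hcast, this, ih hm']
      push_cast; ring
  have hA2 : ∀ n : ℕ, ∀ kk : ℕ, (kk:ℝ) ≤ 2^n → f (kk * d n) = (kk * d n) * f 1 := by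
    intro n kk hk
    have h1 : f ((2^n : ℕ) * d n) = (2^n : ℕ) * f (d n) := hB n _ (by push_cast; exact le_rfl)
    have h2 : ((2^n : ℕ) : ℝ) * d n = 1 := by push_cast; exact hpow n
    rw [h2] at h1
    have hfd : f (d n) = d n * f 1 := by
      have h2n : ((2^n : ℕ):ℝ) ≠ 0 := by positivity
      field_simp at h1 ⊢
      push_cast at h1
      have : d n * ((2:ℝ)^n * f (d n)) = d n * f 1 := by rw [← h1]
      rw [← mul_assoc] at this
      rw [mul_comm (d n) ((2:ℝ)^n)] at this
      rw [hpow n] at this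
      linarith [this]
    rw [hB n kk hk, hfd]; ring
  -- density
  intro x hx
  obtain ⟨hx0, hx1⟩ := hx
  set xs : ℕ → ℝ := fun n => (⌊(2:ℝ)^n * x⌋₊ : ℝ) * d n with hxs
  have hxsle : ∀ n, xs n ≤ x := by
    intro n
    have hfl : (⌊(2:ℝ)^n * x⌋₊ : ℝ) ≤ (2:ℝ)^n * x := Nat.floor_le (by positivity)
    have := (hdpos n).le
    calc xs n = (⌊(2:ℝ)^n * x⌋₊ : ℝ) * d n := rfl
    _ ≤ ((2:ℝ)^n * x) * d n := by nlinarith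
    _ = x * ((2:ℝ)^n * d n) := by ring
    _ = x := by rw [hpow n]; ring
  have hxsge : ∀ n, x - d n ≤ xs n := by
    intro n
    have hfl : (2:ℝ)^n * x < (⌊(2:ℝ)^n * x⌋₊ : ℝ) + 1 := Nat.lt_floor_add_one _
    have hdn := hdpos n
    have h2 : ((2:ℝ)^n * x) * d n = x := by rw [mul_comm ((2:ℝ)^n) x, mul_assoc, hpow n]; ring
    show x - d n ≤ (⌊(2:ℝ)^n * x⌋₊ : ℝ) * d n
    nlinarith [mul_lt_mul_of_pos_right hfl hdn, h2]
  have hxs0 : ∀ n, 0 ≤ xs n := fun n => by positivity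
  have hdlim : Filter.Tendsto d Filter.atTop (nhds 0) := by
    apply tendsto_pow_atTop_nhds_zero_of_lt_one <;> norm_num
  have hxlim : Filter.Tendsto xs Filter.atTop (nhds x) := by
    apply tendsto_of_tendsto_of_tendsto_of_le_of_le (g := fun n => x - d n) (h := fun _ => x)
    · simpa using (tendsto_const_nhds.sub hdlim)
    · exact tendsto_const_nhds
    · exact hxsge
    · exact hxsle
  have hxsval : ∀ n, f (xs n) = xs n * f 1 := by
    intro n
    apply hA2
    have : (2:ℝ)^n * x ≤ 2^n := by nlinarith [pow_pos (by norm_num : (0:ℝ) < 2) n]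
    calc (⌊(2:ℝ)^n * x⌋₊ : ℝ) ≤ (2:ℝ)^n * x := Nat.floor_le (by positivity)
    _ ≤ 2^n := this
  have hmemxs : ∀ n, xs n ∈ Set.Icc (0:ℝ) 1 := fun n => ⟨hxs0 n, le_trans (hxsle n) hx1⟩
  have h1 : Filter.Tendsto (fun n => f (xs n)) Filter.atTop (nhds (f x)) := by
    have hcw : ContinuousWithinAt f (Set.Icc 0 1) x := hc x ⟨hx0, hx1⟩
    apply hcw.tendsto.comp
    apply tendsto_nhdsWithin_of_tendsto_nhds_of_eventually_within _ hxlim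
    exact Filter.Eventually.of_forall hmemxs
  have h2 : Filter.Tendsto (fun n => f (xs n)) Filter.atTop (nhds (x * f 1)) := by
    simp only [hxsval]
    exact hxlim.mul tendsto_const_nhds
  have := tendsto_nhds_unique h1 h2
  rw [this]; ring

section Core
variable (φ : ℝ → ℝ) (p : ℝ) (k : ℝ → ℝ)

lemma slope_anti (hconc : ConcaveOn ℝ (Set.Icc 0 1) φ)
    {x t t' : ℝ} (hx : 0 ≤ x) (ht : 0 < t) (htt' : t ≤ t') (hx1 : x + t' ≤ 1) :
    (φ (x+t') - φ x)/t' ≤ (φ (x+t) - φ x)/t := by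
  rcases eq_or_lt_of_le htt' with rfl|hlt
  · exact le_refl _
  · have hcv := hconc.neg
    have h := hcv.secant_mono (a := x) (x := x+t) (y := x+t')
      ⟨hx, by linarith⟩ ⟨by linarith, by linarith⟩ ⟨by linarith, hx1⟩
      (by intro hh; nlinarith [congrArg id hh]) (by intro hh; nlinarith [congrArg id hh]) (by linarith)
    simp only [Pi.neg_apply] at h
    have h' : -((φ (x+t) - φ x)/t) ≤ -((φ (x+t') - φ x)/t') := by
      convert h using 1
      · rfl
      · rw [show x + t - x = t by ring]; ring
      · rw [show x + t' - x = t' by ring]; ring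
    linarith

lemma slope_bound (hconc : ConcaveOn ℝ (Set.Icc 0 1) φ)
    {x t : ℝ} (hx : 0 < x) (ht : 0 < t) (hx1 : x + t ≤ 1) :
    (φ (x+t) - φ x)/t ≤ (φ x - φ 0)/x := by
  have h := hconc.slope_anti_adjacent (x := (0:ℝ)) (y := x) (z := x+t)
    ⟨le_refl _, by linarith⟩ ⟨by linarith, hx1⟩ hx (by linarith)
  have h1 : x + t - x = t := by ring
  have h2 : x - 0 = x := by ring
  rwa [h1, h2] at h

variable (hp0 : 0 < p) (hp1 : p < 1)
  (hconc : ConcaveOn ℝ (Set.Icc 0 1) φ)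
  (hcont : ContinuousOn φ (Set.Icc 0 1))
  (hmono : StrictMonoOn φ (Set.Icc 0 1))
  (hk : ∀ h, 0 < h → h ≤ 1 → 0 < k h ∧ k h < h)
  (heq : ∀ h, 0 < h → h ≤ 1 → ∀ x, 0 ≤ x → x + h ≤ 1 →
      φ (k h + x) = p * φ (h + x) + (1 - p) * φ x)

include hp0 hp1 hconc hcont hmono hk heq

-- basic facts
lemma hDpos : ∀ x h : ℝ, 0 ≤ x → 0 < h → x + h ≤ 1 → 0 < φ (x+h) - φ x := by
  intro x h hx hh hxh
  have := hmono (Set.mem_Icc.2 ⟨hx, by linarith⟩) (Set.mem_Icc.2 ⟨by linarith, hxh⟩) (by linarith)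
  linarith

lemma hDk : ∀ h, 0 < h → h ≤ 1 → ∀ x, 0 ≤ x → x + h ≤ 1 →
    φ (x + k h) - φ x = p * (φ (x+h) - φ x) := by
  intro h hh h1 x hx hxh
  have := heq h hh h1 x hx hxh
  rw [add_comm x (k h), add_comm x h]
  linarith

lemma hiter : ∀ h, 0 < h → h ≤ 1 → ∀ n : ℕ, 0 < k^[n] h ∧ k^[n] h ≤ h := by
  intro h hh h1 n
  induction n with
  | zero => exact ⟨hh, le_refl _⟩
  | succ m ih =>
    rw [Function.iterate_succ_apply']
    have := hk (k^[m] h) ih.1 (le_trans ih.2 h1)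
    exact ⟨this.1, le_trans this.2.le ih.2⟩

lemma hanti : ∀ h, 0 < h → h ≤ 1 → Antitone (fun n => k^[n] h) := by
  intro h hh h1
  apply antitone_nat_of_succ_le
  intro n
  rw [Function.iterate_succ_apply']
  exact (hk (k^[n] h) (hiter φ p k hp0 hp1 hconc hcont hmono hk heq h hh h1 n).1
    (le_trans (hiter φ p k hp0 hp1 hconc hcont hmono hk heq h hh h1 n).2 h1)).2.le

lemma hlim0 : ∀ h, 0 < h → h ≤ 1 → Filter.Tendsto (fun n => k^[n] h) Filter.atTop (nhds 0) := by
  intro h hh h1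
  set t : ℕ → ℝ := fun n => k^[n] h with hts
  have hpos : ∀ n, 0 < t n := fun n => (hiter φ p k hp0 hp1 hconc hcont hmono hk heq h hh h1 n).1
  have hle : ∀ n, t n ≤ h := fun n => (hiter φ p k hp0 hp1 hconc hcont hmono hk heq h hh h1 n).2
  have hbdd : BddBelow (Set.range t) := ⟨0, by rintro y ⟨n, rfl⟩; exact (hpos n).le⟩
  have hant : Antitone t := hanti φ p k hp0 hp1 hconc hcont hmono hk heq h hh h1
  have hconv := tendsto_atTop_ciInf hant hbdd
  set lam := ⨅ n, t n with hlam
  have hlam0 : 0 ≤ lam := le_ciInf fun n => (hpos n).le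
  have hlamle : lam ≤ h := ciInf_le ⟨0, by rintro y ⟨n, rfl⟩; exact (hpos n).le⟩ 0
  have hlam1 : lam ≤ 1 := le_trans hlamle h1
  -- limit equation
  have heq1 : ∀ n, φ (t (n+1)) = p * φ (t n) + (1-p) * φ 0 := by
    intro n
    have := heq (t n) (hpos n) (le_trans (hle n) h1) 0 (le_refl _)
      (by simpa using le_trans (hle n) h1)
    simp only [add_zero] at this
    rw [hts]
    simp only []
    rw [Function.iterate_succ_apply']
    exact this
  have hmem : ∀ n, t n ∈ Set.Icc (0:ℝ) 1 := fun n => ⟨(hpos n).le, le_trans (hle n) h1⟩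
  have hcw : ContinuousWithinAt φ (Set.Icc 0 1) lam := hcont lam ⟨hlam0, hlam1⟩
  have htin : Filter.Tendsto t Filter.atTop (nhdsWithin lam (Set.Icc 0 1)) := by
    apply tendsto_nhdsWithin_of_tendsto_nhds_of_eventually_within _ hconv
    exact Filter.Eventually.of_forall hmem
  have hφt : Filter.Tendsto (fun n => φ (t n)) Filter.atTop (nhds (φ lam)) := hcw.tendsto.comp htin
  have hφt1 : Filter.Tendsto (fun n => φ (t (n+1))) Filter.atTop (nhds (φ lam)) :=
    hφt.comp (Filter.tendsto_add_atTop_nat 1)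
  have hφt2 : Filter.Tendsto (fun n => p * φ (t n) + (1-p) * φ 0) Filter.atTop
      (nhds (p * φ lam + (1-p) * φ 0)) := by
    exact ((hφt.const_mul p).add tendsto_const_nhds)
  have hkey : φ lam = p * φ lam + (1-p) * φ 0 := by
    have : Filter.Tendsto (fun n => φ (t (n+1))) Filter.atTop (nhds (p * φ lam + (1-p) * φ 0)) := by
      simp only [heq1]; exact hφt2
    exact tendsto_nhds_unique hφt1 this
  have hφeq : φ lam = φ 0 := by nlinarith
  have : lam = 0 := by
    by_contra hne
    have hlampos : 0 < lam := lt_of_le_of_ne hlam0 (Ne.symm hne)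
    have := hmono (Set.mem_Icc.2 ⟨le_refl _, by norm_num⟩) (Set.mem_Icc.2 ⟨hlam0, hlam1⟩) hlampos
    rw [hφeq] at this; exact lt_irrefl _ this
  rwa [this] at hconv

lemma hDratio : ∀ h, 0 < h → h ≤ 1 → ∀ x, 0 ≤ x → x + h ≤ 1 → ∀ n : ℕ,
    (φ (x + k^[n] h) - φ x) * (φ h - φ 0) = (φ (x+h) - φ x) * (φ (k^[n] h) - φ 0) := by
  intro h hh h1 x hx hxh n
  induction n with
  | zero => simp [mul_comm]
  | succ m ih =>
    have hm := hiter φ p k hp0 hp1 hconc hcont hmono hk heq h hh h1 m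
    have e1 : φ (x + k (k^[m] h)) - φ x = p * (φ (x + k^[m] h) - φ x) :=
      hDk φ p k hp0 hp1 hconc hcont hmono hk heq (k^[m] h) hm.1 (le_trans hm.2 h1) x hx
        (by linarith [hm.2])
    have e2 : φ (0 + k (k^[m] h)) - φ 0 = p * (φ (0 + k^[m] h) - φ 0) :=
      hDk φ p k hp0 hp1 hconc hcont hmono hk heq (k^[m] h) hm.1 (le_trans hm.2 h1) 0 (le_refl _)
        (by linarith [hm.2, h1])
    simp only [zero_add] at e2
    rw [Function.iterate_succ_apply', e1, e2]
    nlinarith [ih]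

set_option maxHeartbeats 1000000 in
lemma core : ∃ α γ : ℝ, 0 < α ∧
    ((∀ x ∈ Set.Icc (0:ℝ) 1, φ x = α * x + γ) ∨
      ∃ θ : ℝ, 0 < θ ∧ ∀ x ∈ Set.Icc (0:ℝ) 1,
        φ x = α * (-Real.exp (-θ * x)) + γ) := by
  have DP := hDpos φ p k hp0 hp1 hconc hcont hmono hk heq
  have DK := hDk φ p k hp0 hp1 hconc hcont hmono hk heq
  have IT := hiter φ p k hp0 hp1 hconc hcont hmono hk heq
  have AN := hanti φ p k hp0 hp1 hconc hcont hmono hk heq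
  have LIM := hlim0 φ p k hp0 hp1 hconc hcont hmono hk heq
  have RAT := hDratio φ p k hp0 hp1 hconc hcont hmono hk heq
  -- global bound for slopes at 0
  obtain ⟨B, hB⟩ : ∃ B, ∀ t, 0 < t → t ≤ 1 → (φ (0+t) - φ 0)/t ≤ B := by
    have hhalf : (0:ℝ) < 1/2 := by norm_num
    have hh1 : (1/2 : ℝ) ≤ 1 := by norm_num
    set u : ℕ → ℝ := fun n => k^[n] (1/2) with hu
    have hup : ∀ n, 0 < u n ∧ u n ≤ 1/2 := fun n => IT (1/2) hhalf hh1 n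
    have hCpos : 0 < φ (1/2 + 1/2) - φ (1/2) := DP (1/2) (1/2) (by norm_num) (by norm_num) (by norm_num)
    have hD0h : 0 < φ (1/2) - φ 0 := by
      have := DP 0 (1/2) le_rfl (by norm_num) (by norm_num)
      rwa [zero_add] at this
    set M := (φ (1/2) - φ 0)/(1/2) with hM
    refine ⟨M * (φ (1/2) - φ 0) / (φ (1/2 + 1/2) - φ (1/2)), ?_⟩
    intro t ht ht1
    obtain ⟨n, hn⟩ := ((LIM (1/2) hhalf hh1).eventually_le_const ht).exists
    have hratio := RAT (1/2) hhalf hh1 (1/2) (by norm_num) (by norm_num) n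
    have hsb := slope_bound φ hconc (x := 1/2) (t := u n) (by norm_num) (hup n).1
      (by linarith [(hup n).2])
    have hbn : 0 < φ (0 + u n) - φ 0 := DP 0 (u n) le_rfl (hup n).1 (by linarith [(hup n).2])
    have h1 : (φ (0 + u n) - φ 0)/(u n) ≤ M * (φ (1/2) - φ 0) / (φ (1/2 + 1/2) - φ (1/2)) := by
      rw [div_le_div_iff₀ (hup n).1 hCpos]
      have ha : φ (1/2 + u n) - φ (1/2) ≤ M * u n := by
        rw [div_le_div_iff₀ (hup n).1 (by norm_num : (0:ℝ) < 1/2)] at hsb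
        nlinarith [hsb]
      have e : (φ (1/2 + u n) - φ (1/2)) * (φ (1/2) - φ 0)
          = (φ (1/2 + 1/2) - φ (1/2)) * (φ (u n) - φ 0) := hratio
      have e0 : φ (0 + u n) = φ (u n) := by rw [zero_add]
      rw [e0]
      nlinarith [mul_le_mul_of_nonneg_right ha hD0h.le]
    exact le_trans (slope_anti φ hconc (x := 0) le_rfl (hup n).1 hn (by linarith)) h1
  -- the sup of slopes
  set S : ℝ → ℝ := fun x => sSup ((fun t => (φ (x+t) - φ x)/t) '' Set.Ioc 0 (1-x)) with hSdef
  have hne : ∀ x : ℝ, x < 1 → ((fun t => (φ (x+t) - φ x)/t) '' Set.Ioc 0 (1-x)).Nonempty :=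
    fun x hx => ⟨_, ⟨1-x, ⟨by linarith, le_rfl⟩, rfl⟩⟩
  have hbdd : ∀ x : ℝ, 0 ≤ x → x < 1 →
      BddAbove ((fun t => (φ (x+t) - φ x)/t) '' Set.Ioc 0 (1-x)) := by
    intro x hx0 hx1
    rcases eq_or_lt_of_le hx0 with rfl|hxpos
    · exact ⟨B, by rintro y ⟨t, ⟨ht0, ht1⟩, rfl⟩; exact hB t ht0 (by linarith)⟩
    · refine ⟨(φ x - φ 0)/x, ?_⟩
      rintro y ⟨t, ⟨ht0, ht1⟩, rfl⟩
      exact slope_bound φ hconc hxpos ht0 (by linarith)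
  have hSmem : ∀ x : ℝ, 0 ≤ x → x < 1 → ∀ t, 0 < t → t ≤ 1 - x → (φ (x+t) - φ x)/t ≤ S x :=
    fun x hx0 hx1 t ht0 ht1 => le_csSup (hbdd x hx0 hx1) ⟨t, ⟨ht0, ht1⟩, rfl⟩
  have hSpos : ∀ x : ℝ, 0 ≤ x → x < 1 → 0 < S x := by
    intro x hx0 hx1
    have h1 : 0 < (φ (x+(1-x)) - φ x)/(1-x) :=
      div_pos (DP x (1-x) hx0 (by linarith) (by linarith)) (by linarith)
    exact lt_of_lt_of_le h1 (hSmem x hx0 hx1 (1-x) (by linarith) le_rfl)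
  have hlimS : ∀ x : ℝ, 0 ≤ x → x < 1 → ∀ t : ℕ → ℝ, (∀ n, 0 < t n ∧ t n ≤ 1-x) →
      Antitone t → Filter.Tendsto t Filter.atTop (nhds 0) →
      Filter.Tendsto (fun n => (φ (x + t n) - φ x)/(t n)) Filter.atTop (nhds (S x)) := by
    intro x hx0 hx1 t htm hta htl
    have hmonoSl : Monotone (fun n => (φ (x + t n) - φ x)/(t n)) := by
      intro n m hnm
      exact slope_anti φ hconc hx0 (htm m).1 (hta hnm) (by linarith [(htm n).2])
    have hsub : Set.range (fun n => (φ (x + t n) - φ x)/(t n)) ⊆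
        (fun t => (φ (x+t) - φ x)/t) '' Set.Ioc 0 (1-x) := by
      rintro y ⟨n, rfl⟩; exact ⟨t n, ⟨(htm n).1, (htm n).2⟩, rfl⟩
    have hbddr : BddAbove (Set.range fun n => (φ (x + t n) - φ x)/(t n)) :=
      (hbdd x hx0 hx1).mono hsub
    have h1 := tendsto_atTop_ciSup hmonoSl hbddr
    have h2 : (⨆ n, (φ (x + t n) - φ x)/(t n)) = S x := by
      apply le_antisymm
      · exact ciSup_le fun n => hSmem x hx0 hx1 (t n) (htm n).1 (htm n).2
      · apply csSup_le (hne x hx1)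
        rintro y ⟨τ, ⟨hτ0, hτ1⟩, rfl⟩
        obtain ⟨n, hn⟩ := (htl.eventually_le_const hτ0).exists
        exact le_trans (slope_anti φ hconc hx0 (htm n).1 hn (by linarith)) (le_ciSup hbddr n)
    rwa [h2] at h1
  have hS0pos : 0 < S 0 := hSpos 0 le_rfl (by norm_num)
  -- constancy of the ratio
  have hconst : ∀ x : ℝ, 0 < x → x < 1 → ∀ h : ℝ, 0 < h → x + h ≤ 1 →
      (φ (x+h) - φ x) * S 0 = S x * (φ (0+h) - φ 0) := by
    intro x hx0 hx1 h hh0 hxh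
    set t : ℕ → ℝ := fun n => k^[n] h with ht
    have hh1 : h ≤ 1 := by linarith
    have hit : ∀ n, 0 < t n ∧ t n ≤ h := fun n => IT h hh0 hh1 n
    have hta : Antitone t := AN h hh0 hh1
    have htl : Filter.Tendsto t Filter.atTop (nhds 0) := LIM h hh0 hh1
    have hLx := hlimS x hx0.le hx1 t (fun n => ⟨(hit n).1, by linarith [(hit n).2]⟩) hta htl
    have hL0 := hlimS 0 le_rfl (by norm_num) t
      (fun n => ⟨(hit n).1, by linarith [(hit n).2]⟩) hta htl
    have hdiv : Filter.Tendsto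
        (fun n => ((φ (x + t n) - φ x)/(t n)) / ((φ (0 + t n) - φ 0)/(t n)))
        Filter.atTop (nhds (S x / S 0)) := hLx.div hL0 (ne_of_gt hS0pos)
    have hb2 : 0 < φ (0 + h) - φ 0 := DP 0 h le_rfl hh0 (by linarith)
    have hconstseq : ∀ n, ((φ (x + t n) - φ x)/(t n)) / ((φ (0 + t n) - φ 0)/(t n))
        = (φ (x+h) - φ x) / (φ (0+h) - φ 0) := by
      intro n
      have hrat := RAT h hh0 hh1 x hx0.le hxh n
      have hb1 : 0 < φ (0 + t n) - φ 0 := DP 0 (t n) le_rfl (hit n).1 (by linarith [(hit n).2])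
      have htn0 : (t n : ℝ) ≠ 0 := ne_of_gt (hit n).1
      have hstep : ((φ (x + t n) - φ x)/(t n)) / ((φ (0 + t n) - φ 0)/(t n))
          = (φ (x + t n) - φ x) / (φ (0 + t n) - φ 0) := by
        field_simp
      rw [hstep, div_eq_div_iff (ne_of_gt hb1) (ne_of_gt hb2)]
      have e0 : φ (0 + t n) = φ (t n) := by rw [zero_add]
      have e1 : φ (0 + h) = φ h := by rw [zero_add]
      rw [e0, e1]
      exact hrat
    have hconstlim : Filter.Tendsto
        (fun _ : ℕ => (φ (x+h) - φ x) / (φ (0+h) - φ 0)) Filter.atTop (nhds (S x / S 0)) := by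
      simp only [hconstseq] at hdiv
      exact hdiv
    have heqd : (φ (x+h) - φ x) / (φ (0+h) - φ 0) = S x / S 0 :=
      tendsto_nhds_unique tendsto_const_nhds hconstlim
    rw [div_eq_div_iff (ne_of_gt hb2) (ne_of_gt hS0pos)] at heqd
    linarith
  -- the multiplier L
  set L : ℝ → ℝ := fun x => S x / S 0 with hLdef
  have hLpos : ∀ x : ℝ, 0 < x → x < 1 → 0 < L x :=
    fun x hx0 hx1 => div_pos (hSpos x hx0.le hx1) hS0pos
  have hkey2 : ∀ x : ℝ, 0 < x → x < 1 → ∀ h : ℝ, 0 < h → x + h ≤ 1 →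
      φ (x+h) - φ x = L x * (φ h - φ 0) := by
    intro x hx0 hx1 h hh0 hxh
    have := hconst x hx0 hx1 h hh0 hxh
    rw [zero_add] at this
    rw [hLdef]
    field_simp
    linarith
  have hΦpos : ∀ x : ℝ, 0 < x → x ≤ 1 → 0 < φ x - φ 0 := by
    intro x hx hx1
    have := DP 0 x le_rfl hx (by linarith)
    rwa [zero_add] at this
  have hswap : ∀ x h : ℝ, 0 < x → 0 < h → x + h ≤ 1 →
      (L x - 1) * (φ h - φ 0) = (L h - 1) * (φ x - φ 0) := by
    intro x h hx hh hxh
    have hx1 : x < 1 := by linarith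
    have hh1 : h < 1 := by linarith
    have e1 := hkey2 x hx hx1 h hh hxh
    have e2 := hkey2 h hh hh1 x hx (by linarith)
    rw [add_comm h x] at e2
    linear_combination e2 - e1
  set c := (L (1/4) - 1) / (φ (1/4) - φ 0) with hcdef
  have hΦ4 : 0 < φ (1/4) - φ 0 := hΦpos (1/4) (by norm_num) (by norm_num)
  have hc4 : L (1/4) - 1 = c * (φ (1/4) - φ 0) := by
    rw [hcdef]; field_simp
  have hcL1 : ∀ x : ℝ, 0 < x → x ≤ 3/4 → L x - 1 = c * (φ x - φ 0) := by
    intro x hx hx34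
    have hsw := hswap x (1/4) hx (by norm_num) (by linarith)
    rw [hc4] at hsw
    exact mul_right_cancel₀ (ne_of_gt hΦ4) (by linear_combination hsw)
  have hcL : ∀ x : ℝ, 0 < x → x < 1 → L x - 1 = c * (φ x - φ 0) := by
    intro x hx hx1
    rcases le_or_gt x (3/4) with h34|h34
    · exact hcL1 x hx h34
    · have hh0 : 0 < (1-x)/2 := by linarith
      have hh34 : (1-x)/2 ≤ 3/4 := by linarith
      have hxh : x + (1-x)/2 ≤ 1 := by linarith
      have hsw := hswap x ((1-x)/2) hx hh0 hxh
      rw [hcL1 ((1-x)/2) hh0 hh34] at hsw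
      have hΦh : 0 < φ ((1-x)/2) - φ 0 := hΦpos ((1-x)/2) hh0 (by linarith)
      exact mul_right_cancel₀ (ne_of_gt hΦh) (by linear_combination hsw)
  have hmaster : ∀ x h : ℝ, 0 < x → 0 < h → x + h ≤ 1 →
      φ (x+h) - φ 0 = (φ x - φ 0) + (φ h - φ 0) + c * (φ x - φ 0) * (φ h - φ 0) := by
    intro x h hx hh hxh
    have hx1 : x < 1 := by linarith
    have e := hkey2 x hx hx1 h hh hxh
    have eL := hcL x hx hx1
    linear_combination e + (φ h - φ 0) * eL
  -- case split
  rcases eq_or_ne c 0 with hc0|hc0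
  · -- affine
    have hadd : ∀ x ∈ Set.Icc (0:ℝ) 1, ∀ y ∈ Set.Icc (0:ℝ) 1, x + y ≤ 1 →
        (fun z => φ z - φ 0) (x+y) = (fun z => φ z - φ 0) x + (fun z => φ z - φ 0) y := by
      intro x hx y hy hxy
      simp only []
      rcases eq_or_lt_of_le hx.1 with h|hx0
      · rw [← h, zero_add]; ring
      rcases eq_or_lt_of_le hy.1 with h|hy0
      · rw [← h, add_zero]; ring
      have := hmaster x y hx0 hy0 hxy
      rw [hc0] at this
      linarith
    have hlin := cauchy_lin (fun z => φ z - φ 0) (hcont.sub continuousOn_const) hadd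
    refine ⟨φ 1 - φ 0, φ 0, hΦpos 1 one_pos le_rfl, Or.inl ?_⟩
    intro x hx
    have := hlin x hx
    linarith
  · -- exponential
    set F : ℝ → ℝ := fun x => 1 + c * (φ x - φ 0) with hFdef
    have hF0 : F 0 = 1 := by simp [hFdef]
    have hFmul : ∀ x ∈ Set.Icc (0:ℝ) 1, ∀ y ∈ Set.Icc (0:ℝ) 1, x + y ≤ 1 →
        F (x+y) = F x * F y := by
      intro x hx y hy hxy
      rcases eq_or_lt_of_le hx.1 with h|hx0
      · rw [← h, zero_add, hF0, one_mul]
      rcases eq_or_lt_of_le hy.1 with h|hy0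
      · rw [← h, add_zero, hF0, mul_one]
      have := hmaster x y hx0 hy0 hxy
      simp only [hFdef]
      linear_combination c * this
    have hFL : ∀ x : ℝ, 0 < x → x < 1 → F x = L x := by
      intro x hx0 hx1
      have := hcL x hx0 hx1
      simp only [hFdef]
      linarith
    have hFpos : ∀ x ∈ Set.Icc (0:ℝ) 1, 0 < F x := by
      intro x hx
      rcases eq_or_lt_of_le hx.1 with h|hx0
      · rw [← h, hF0]; norm_num
      rcases eq_or_lt_of_le hx.2 with h|hx1
      · have hhalf : (1/2 : ℝ) ∈ Set.Icc (0:ℝ) 1 := by norm_num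
        have hm := hFmul (1/2) hhalf (1/2) hhalf (by norm_num)
        have hhv : (1/2 : ℝ) + 1/2 = 1 := by norm_num
        rw [hhv] at hm
        have hFhalf : 0 < F (1/2) := by
          rw [hFL (1/2) (by norm_num) (by norm_num)]
          exact hLpos (1/2) (by norm_num) (by norm_num)
        rw [h, hm]
        positivity
      · rw [hFL x hx0 hx1]
        exact hLpos x hx0 hx1
    have hFcont : ContinuousOn F (Set.Icc 0 1) :=
      continuousOn_const.add (continuousOn_const.mul (hcont.sub continuousOn_const))
    set G : ℝ → ℝ := fun x => Real.log (F x) with hGdef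
    have hGadd : ∀ x ∈ Set.Icc (0:ℝ) 1, ∀ y ∈ Set.Icc (0:ℝ) 1, x + y ≤ 1 →
        G (x+y) = G x + G y := by
      intro x hx y hy hxy
      simp only [hGdef]
      rw [hFmul x hx y hy hxy, Real.log_mul (ne_of_gt (hFpos x hx)) (ne_of_gt (hFpos y hy))]
    have hGcont : ContinuousOn G (Set.Icc 0 1) :=
      hFcont.log (fun x hx => ne_of_gt (hFpos x hx))
    have hGlin := cauchy_lin G hGcont hGadd
    set lam := G 1 with hlamdef
    have hFexp : ∀ x ∈ Set.Icc (0:ℝ) 1, F x = Real.exp (lam * x) := by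
      intro x hx
      have h1 : G x = lam * x := hGlin x hx
      have h2 : Real.log (F x) = lam * x := h1
      rw [← Real.exp_log (hFpos x hx), h2]
    have hΦ1 : 0 < φ 1 - φ 0 := hΦpos 1 one_pos le_rfl
    have hlamne : lam ≠ 0 := by
      intro h0
      have h1 := hFexp 1 ⟨by norm_num, le_rfl⟩
      rw [h0, zero_mul, Real.exp_zero] at h1
      simp only [hFdef] at h1
      have : c * (φ 1 - φ 0) = 0 := by linarith
      rcases mul_eq_zero.1 this with h|h
      · exact hc0 h
      · linarith
    have hchalf := hFexp (1/2) ⟨by norm_num, by norm_num⟩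
    have hc1v := hFexp 1 ⟨by norm_num, le_rfl⟩
    have hΦhalf_ge : (φ 1 - φ 0)/2 ≤ φ (1/2) - φ 0 := by
      have h := hconc.2 (Set.mem_Icc.2 ⟨le_rfl, by norm_num⟩ : (0:ℝ) ∈ Set.Icc (0:ℝ) 1)
        (Set.mem_Icc.2 ⟨by norm_num, le_rfl⟩ : (1:ℝ) ∈ Set.Icc (0:ℝ) 1)
        (by norm_num : (0:ℝ) ≤ 1/2) (by norm_num : (0:ℝ) ≤ 1/2) (by norm_num)
      simp only [smul_eq_mul] at h
      have he : (1/2 : ℝ) * 0 + (1/2 : ℝ) * 1 = 1/2 := by norm_num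
      rw [he] at h
      linarith
    have hcneg : c < 0 := by
      rcases lt_trichotomy c 0 with h|h|h
      · exact h
      · exact absurd h hc0
      · exfalso
        set u := Real.exp (lam * (1/2)) with hudef
        have hu2 : Real.exp (lam * 1) = u^2 := by
          rw [hudef, sq, ← Real.exp_add]
          congr 1
          ring
        have hune : u - 1 ≠ 0 := by
          intro h1
          have hu1 : u = 1 := by linarith
          have he : Real.exp (lam * (1/2)) = Real.exp 0 := by rw [← hudef, hu1, Real.exp_zero]
          have := Real.exp_eq_exp.1 he
          apply hlamne
          linarith
        have husq : 0 < (u-1)^2 := by positivity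
        have e1 : 1 + c * (φ (1/2) - φ 0) = u := by
          simp only [hFdef] at hchalf
          exact hchalf
        have e2 : 1 + c * (φ 1 - φ 0) = u^2 := by
          simp only [hFdef] at hc1v
          rw [hc1v, hu2]
        nlinarith [mul_le_mul_of_nonneg_left hΦhalf_ge h.le, e1, e2, husq]
    have hlamneg : lam < 0 := by
      have e2 : 1 + c * (φ 1 - φ 0) = Real.exp (lam * 1) := by
        simp only [hFdef] at hc1v
        exact hc1v
      have hlt : Real.exp (lam * 1) < 1 := by
        nlinarith [mul_neg_of_neg_of_pos hcneg hΦ1]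
      rw [mul_one] at hlt
      rw [← Real.exp_zero] at hlt
      exact Real.exp_lt_exp.1 hlt
    have hcinv : 0 < -1/c := by
      rw [div_pos_iff]
      right
      constructor
      · norm_num
      · exact hcneg
    refine ⟨-1/c, -1/c + φ 0, hcinv, Or.inr ⟨-lam, by linarith, ?_⟩⟩
    intro x hx
    have hFx := hFexp x hx
    simp only [hFdef] at hFx
    show φ x = -1/c * -Real.exp (-(-lam) * x) + (-1/c + φ 0)
    rw [show -(-lam) * x = lam * x by ring]
    have hcne : c ≠ 0 := hc0
    field_simp
    linear_combination hFx

end Core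


lemma int_indicator_phi {Y : Type*} {m0 : MeasurableSpace Y} (π : Measure Y)
    [IsProbabilityMeasure π] (A : Set Y) (hAm : MeasurableSet A) (φ : ℝ → ℝ) (h x : ℝ) :
    (∫ y, φ (A.indicator (fun _ => h) y + x) ∂π)
      = (π A).toReal * (φ (h+x) - φ x) + φ x := by
  have hfeq : (fun y => φ (A.indicator (fun _ => h) y + x))
      = fun y => A.indicator (fun _ => φ (h+x) - φ x) y + φ x := by
    funext y
    by_cases hy : y ∈ A
    · simp [Set.indicator_of_mem hy]
    · simp [Set.indicator_of_notMem hy]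
  rw [hfeq]
  rw [integral_add ((integrable_const (φ (h+x) - φ x)).indicator hAm) (integrable_const (φ x))]
  rw [integral_indicator_const _ hAm, integral_const]
  simp [smul_eq_mul, measure_univ, Measure.real]

/-- Lemma `auxiliary_lemma_smooth`: a concave, continuous, strictly
increasing `φ` on `[0,1]` whose expected-utility certainty equivalent
`I(ξ) = φ⁻¹(∫ φ(ξ) dπ)` (on bounded `ℬ`-measurable `[0,1]`-valued functions,
for a sub-σ-algebra `ℬ` containing an event of probability strictly between 0
and 1) is translation invariant must be, up to a positive affine
transformation, the identity or `x ↦ −exp(−θx)` with `θ > 0`. -/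
theorem stmt7 {Y : Type*} {m0 : MeasurableSpace Y} (ℬ : MeasurableSpace Y)
    (hsub : ℬ ≤ m0)
    (π : Measure Y) [IsProbabilityMeasure π]
    (A : Set Y) (hA : MeasurableSet[ℬ] A)
    (hp : π A ∈ Set.Ioo (0 : ℝ≥0∞) 1)
    (φ ψ : ℝ → ℝ)
    (hconc : ConcaveOn ℝ (Set.Icc 0 1) φ)
    (hcont : ContinuousOn φ (Set.Icc 0 1))
    (hmono : StrictMonoOn φ (Set.Icc 0 1))
    (hinv : ∀ x ∈ Set.Icc (0 : ℝ) 1, ψ (φ x) = x)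
    (hTI : ∀ ξ : Y → ℝ, Measurable[ℬ] ξ → (∀ y, ξ y ∈ Set.Icc (0 : ℝ) 1) →
      ∀ c : ℝ, (∀ y, ξ y + c ∈ Set.Icc (0 : ℝ) 1) →
        ψ (∫ y, φ (ξ y + c) ∂π) = ψ (∫ y, φ (ξ y) ∂π) + c) :
    ∃ α γ : ℝ, 0 < α ∧
      ((∀ x ∈ Set.Icc (0 : ℝ) 1, φ x = α * x + γ) ∨
        ∃ θ : ℝ, 0 < θ ∧ ∀ x ∈ Set.Icc (0 : ℝ) 1,
          φ x = α * (-Real.exp (-θ * x)) + γ) := by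
  have hAfin : π A ≠ ⊤ := ne_top_of_lt (lt_of_lt_of_le hp.2 le_top)
  set p : ℝ := (π A).toReal with hpdef
  have hp0' : 0 < p := ENNReal.toReal_pos (ne_of_gt hp.1) hAfin
  have hp1' : p < 1 := by
    have := (ENNReal.toReal_lt_toReal hAfin (by norm_num : (1:ℝ≥0∞) ≠ ⊤)).2 hp.2
    simpa using this
  -- integral identity
  have hInt : ∀ h x : ℝ, (∫ y, φ (A.indicator (fun _ => h) y + x) ∂π)
      = p * (φ (h+x) - φ x) + φ x :=
    fun h x => int_indicator_phi π A hA φ h x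
  have hIVT := intermediate_value_Icc (by norm_num : (0:ℝ) ≤ 1) hcont
  have hφ01 : φ 0 < φ 1 := hmono (Set.mem_Icc.2 ⟨le_rfl, by norm_num⟩)
    (Set.mem_Icc.2 ⟨by norm_num, le_rfl⟩) one_pos
  -- the key equation
  set k : ℝ → ℝ := fun h => ψ (p * (φ h - φ 0) + φ 0) with hkdef
  have hmain : ∀ h, 0 < h → h ≤ 1 → ∀ x, 0 ≤ x → x + h ≤ 1 →
      k h + x ∈ Set.Icc (0:ℝ) 1 ∧ φ (k h + x) = p * φ (h + x) + (1 - p) * φ x := by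
    intro h hh0 hh1 x hx0 hxh
    set ξ : Y → ℝ := A.indicator (fun _ => h) with hξdef
    have hmeas : Measurable[ℬ] ξ := measurable_const.indicator hA
    have hval : ∀ y, ξ y ∈ Set.Icc (0:ℝ) 1 := by
      intro y
      by_cases hy : y ∈ A
      · simp [hξdef, Set.indicator_of_mem hy]; constructor <;> linarith
      · simp [hξdef, Set.indicator_of_notMem hy]
    have hval' : ∀ y, ξ y + x ∈ Set.Icc (0:ℝ) 1 := by
      intro y
      by_cases hy : y ∈ A
      · simp [hξdef, Set.indicator_of_mem hy]; constructor <;> linarith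
      · simp [hξdef, Set.indicator_of_notMem hy]; constructor <;> linarith
    have hTIeq := hTI ξ hmeas hval x hval'
    have hI1 : (∫ y, φ (ξ y + x) ∂π) = p * (φ (h+x) - φ x) + φ x := hInt h x
    have hI0 : (∫ y, φ (ξ y) ∂π) = p * (φ h - φ 0) + φ 0 := by
      have : (fun y => φ (ξ y)) = fun y => φ (ξ y + 0) := by funext y; rw [add_zero]
      rw [this, hInt h 0, add_zero]
    rw [hI1, hI0] at hTIeq
    -- v := p * (φ (h+x) - φ x) + φ x lies in [φ 0, φ 1]
    have hmem_x : x ∈ Set.Icc (0:ℝ) 1 := ⟨hx0, by linarith⟩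
    have hmem_hx : h + x ∈ Set.Icc (0:ℝ) 1 := ⟨by linarith, by linarith⟩
    have hlt : φ x < φ (h+x) := hmono hmem_x hmem_hx (by linarith)
    have hφ0x : φ 0 ≤ φ x := by
      rcases eq_or_lt_of_le hx0 with hx|hx
      · rw [← hx]
      · exact (hmono (Set.mem_Icc.2 ⟨le_rfl, by norm_num⟩) hmem_x hx).le
    have hφx1 : φ (h+x) ≤ φ 1 := by
      rcases eq_or_lt_of_le (show h + x ≤ 1 by linarith) with hx|hx
      · rw [hx]
      · exact (hmono hmem_hx (Set.mem_Icc.2 ⟨by norm_num, le_rfl⟩) hx).le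
    have hvmem : p * (φ (h+x) - φ x) + φ x ∈ Set.Icc (φ 0) (φ 1) := by
      constructor
      · nlinarith
      · nlinarith
    obtain ⟨t, htmem, htval⟩ := hIVT hvmem
    have hψv : ψ (p * (φ (h+x) - φ x) + φ x) = t := by rw [← htval, hinv t htmem]
    -- the TI equation says ψ v = k h + x
    have hkx : k h + x = t := by rw [← hψv, hTIeq, hkdef]
    refine ⟨by rw [hkx]; exact htmem, ?_⟩
    rw [hkx, htval]
    ring
  have heq : ∀ h, 0 < h → h ≤ 1 → ∀ x, 0 ≤ x → x + h ≤ 1 →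
      φ (k h + x) = p * φ (h + x) + (1 - p) * φ x :=
    fun h hh0 hh1 x hx0 hxh => (hmain h hh0 hh1 x hx0 hxh).2
  have hk : ∀ h, 0 < h → h ≤ 1 → 0 < k h ∧ k h < h := by
    intro h hh0 hh1
    have h0 := hmain h hh0 hh1 0 le_rfl (by linarith)
    have hmemk : k h + 0 ∈ Set.Icc (0:ℝ) 1 := h0.1
    rw [add_zero] at hmemk
    have hφk : φ (k h) = p * φ h + (1-p) * φ 0 := by
      have := h0.2
      rw [add_zero, add_zero] at this
      exact this
    have hmem_h : h ∈ Set.Icc (0:ℝ) 1 := ⟨hh0.le, hh1⟩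
    have hφ0h : φ 0 < φ h := hmono (Set.mem_Icc.2 ⟨le_rfl, by norm_num⟩) hmem_h hh0
    have h1 : φ 0 < φ (k h) := by nlinarith
    have h2 : φ (k h) < φ h := by nlinarith
    constructor
    · by_contra hle
      push_neg at hle
      have : k h = 0 := le_antisymm hle hmemk.1
      rw [this] at h1
      exact lt_irrefl _ h1
    · by_contra hle
      push_neg at hle
      rcases eq_or_lt_of_le hle with he|hlt
      · rw [← he] at h2; exact lt_irrefl _ h2
      · have := hmono hmem_h hmemk hlt
        linarith
  exact core φ p k hp0' hp1' hconc hcont hmono hk heq
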